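/- Proposition 8 (error floor): For every fixed d > 0, Ψ(ε,d) → 1 − e^{−d} as ε → 0⁺; i.e., the compound outage probability for the class {μ : D(μ0‖μ) ≤ d} tends to the floor 1 − e^{−d} as the nominal outage probability vanishes. -/

import Mathlib

open Real Filter

theorem stmt_16 (d : ℝ) (hd : 0 < d) (t : ℝ → ℝ)
    (ht : ∀ e ∈ Set.Ioo (0 : ℝ) 1, 1 < t e ∧
      (t e) ^ e * (t e - 1) ^ (1 - e) / (t e - 1 + e) = Real.exp (-d)) :
    Tendsto (fun e : ℝ => Real.exp (-d) * (t e - 1) ^ (e - 1) * (t e) ^ (1 - e) * e)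
      (nhdsWithin 0 (Set.Ioo 0 1)) (nhds (1 - Real.exp (-d))) := by
  set l := nhdsWithin (0:ℝ) (Set.Ioo 0 1) with hl
  have hmem : ∀ᶠ e in l, e ∈ Set.Ioo (0:ℝ) 1 := eventually_mem_nhdsWithin
  set r : ℝ → ℝ := fun e => e / (t e - 1) with hr_def
  -- pointwise key equation
  have hkey : ∀ e ∈ Set.Ioo (0:ℝ) 1,
      Real.log (1 + r e) = d + e * Real.log (t e) - e * Real.log (t e - 1) := by
    intro e he
    obtain ⟨h1, h2⟩ := ht e he
    have he0 : 0 < e := he.1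
    have hs : 0 < t e - 1 := by linarith
    have ht0 : 0 < t e := by linarith
    have hse : 0 < t e - 1 + e := by linarith
    have heq : (t e) ^ e * (t e - 1) ^ (1 - e) = Real.exp (-d) * (t e - 1 + e) :=
      (div_eq_iff hse.ne').mp h2
    have hlog : e * Real.log (t e) + (1 - e) * Real.log (t e - 1)
        = -d + Real.log (t e - 1 + e) := by
      have hc := congrArg Real.log heq
      rw [Real.log_mul (ne_of_gt (Real.rpow_pos_of_pos ht0 e))
          (ne_of_gt (Real.rpow_pos_of_pos hs (1 - e))),
        Real.log_mul (Real.exp_ne_zero _) hse.ne',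
        Real.log_rpow ht0, Real.log_rpow hs, Real.log_exp] at hc
      linarith
    have h3 : Real.log (1 + r e) = Real.log (t e - 1 + e) - Real.log (t e - 1) := by
      rw [show (1:ℝ) + r e = (t e - 1 + e) / (t e - 1) by
        simp only [hr_def]; field_simp, Real.log_div hse.ne' hs.ne']
    linarith
  -- positivity and bounds
  have hrpos : ∀ e ∈ Set.Ioo (0:ℝ) 1, 0 < r e := by
    intro e he
    obtain ⟨h1, _⟩ := ht e he
    exact div_pos he.1 (by linarith)
  have hlow : ∀ e ∈ Set.Ioo (0:ℝ) 1, d ≤ Real.log (1 + r e) := by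
    intro e he
    obtain ⟨h1, _⟩ := ht e he
    have hs : 0 < t e - 1 := by linarith
    have hle : Real.log (t e - 1) ≤ Real.log (t e) := Real.log_le_log hs (by linarith)
    have := mul_le_mul_of_nonneg_left hle he.1.le
    linarith [hkey e he]
  have hup : ∀ e ∈ Set.Ioo (0:ℝ) 1,
      Real.log (1 + r e) ≤ (d + e * Real.log (1 + 1/e)) / (1 - e) := by
    intro e he
    obtain ⟨h1, _⟩ := ht e he
    have he0 : 0 < e := he.1
    have he1 : e < 1 := he.2
    have hs : 0 < t e - 1 := by linarith
    have ht0 : 0 < t e := by linarith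
    have hA : Real.log (t e) - Real.log (t e - 1) ≤
        Real.log (1 + r e) + Real.log (1 + 1/e) := by
      have h1r : 0 < 1 + r e := by linarith [hrpos e he]
      have h1e : 0 < 1 + 1/e := by positivity
      have hdivle : t e / (t e - 1) ≤ (1 + r e) * (1 + 1/e) := by
        rw [div_le_iff₀ hs, hr_def]
        have expand : (1 + e / (t e - 1)) * (1 + 1/e) * (t e - 1)
            = (t e - 1) + e + (t e - 1)/e + 1 := by field_simp; ring
        rw [expand]
        have : 0 < (t e - 1)/e := by positivity
        linarith
      calc Real.log (t e) - Real.log (t e - 1) = Real.log (t e / (t e - 1)) :=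
            (Real.log_div ht0.ne' hs.ne').symm
        _ ≤ Real.log ((1 + r e) * (1 + 1/e)) :=
            Real.log_le_log (by positivity) hdivle
        _ = Real.log (1 + r e) + Real.log (1 + 1/e) := Real.log_mul h1r.ne' h1e.ne'
    have hB := mul_le_mul_of_nonneg_left hA he0.le
    have hkey' := hkey e he
    rw [le_div_iff₀ (by linarith : (0:ℝ) < 1 - e)]
    nlinarith [hB, hkey']
  -- e * log(1+1/e) → 0
  have haux : Tendsto (fun e : ℝ => e * Real.log (1 + 1/e)) l (nhds 0) := by
    have hub : Tendsto (fun e : ℝ => 2 * Real.sqrt (e^2 + e)) l (nhds 0) := by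
      have hc : Continuous fun e : ℝ => 2 * Real.sqrt (e^2 + e) := by continuity
      have h2 : Tendsto (fun e : ℝ => 2 * Real.sqrt (e^2 + e)) l
          (nhds (2 * Real.sqrt (0^2 + 0))) :=
        (hc.tendsto 0).mono_left nhdsWithin_le_nhds
      simpa using h2
    refine tendsto_of_tendsto_of_tendsto_of_le_of_le' tendsto_const_nhds hub ?_ ?_
    · filter_upwards [hmem] with e he
      have hln : 0 ≤ Real.log (1 + 1/e) := Real.log_nonneg (by
        have : 0 < 1/e := one_div_pos.mpr he.1
        linarith)
      exact mul_nonneg he.1.le hln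
    · filter_upwards [hmem] with e he
      have he0 : 0 < e := he.1
      have h1e : (0:ℝ) < 1 + 1/e := by positivity
      have hls : Real.log (1 + 1/e) = 2 * Real.log (Real.sqrt (1 + 1/e)) := by
        rw [Real.log_sqrt h1e.le]; ring
      have hsle : Real.log (Real.sqrt (1 + 1/e)) ≤ Real.sqrt (1 + 1/e) :=
        (Real.log_le_sub_one_of_pos (Real.sqrt_pos.mpr h1e)).trans (by linarith)
      have hsq : e * Real.sqrt (1 + 1/e) = Real.sqrt (e^2 + e) := by
        rw [show e^2 + e = e^2 * (1 + 1/e) by field_simp,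
          Real.sqrt_mul (by positivity), Real.sqrt_sq he0.le]
      calc e * Real.log (1 + 1/e) = 2 * (e * Real.log (Real.sqrt (1 + 1/e))) := by
            rw [hls]; ring
        _ ≤ 2 * (e * Real.sqrt (1 + 1/e)) := by
            have := mul_le_mul_of_nonneg_left hsle he0.le
            linarith
        _ = 2 * Real.sqrt (e^2 + e) := by rw [hsq]
  -- upper bound tends to d
  have hB : Tendsto (fun e : ℝ => (d + e * Real.log (1 + 1/e)) / (1 - e)) l (nhds d) := by
    have hnum : Tendsto (fun e : ℝ => d + e * Real.log (1 + 1/e)) l (nhds d) := by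
      simpa using tendsto_const_nhds.add haux
    have hden : Tendsto (fun e : ℝ => 1 - e) l (nhds 1) := by
      have : Tendsto (fun e : ℝ => e) l (nhds 0) :=
        tendsto_id.mono_right nhdsWithin_le_nhds
      simpa using tendsto_const_nhds.sub this
    have hq : Tendsto (fun e : ℝ => (d + e * Real.log (1 + 1/e)) / (1 - e)) l (nhds (d / 1)) :=
      hnum.div hden one_ne_zero
    rw [div_one] at hq
    exact hq
  -- log(1 + r) → d
  have hg : Tendsto (fun e => Real.log (1 + r e)) l (nhds d) := by
    refine tendsto_of_tendsto_of_tendsto_of_le_of_le' tendsto_const_nhds hB ?_ ?_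
    · filter_upwards [hmem] with e he using hlow e he
    · filter_upwards [hmem] with e he using hup e he
  -- r → exp d − 1
  have hrt : Tendsto r l (nhds (Real.exp d - 1)) := by
    have h1 : Tendsto (fun e => Real.exp (Real.log (1 + r e)) - 1) l
        (nhds (Real.exp d - 1)) :=
      ((Real.continuous_exp.tendsto d).comp hg).sub tendsto_const_nhds
    refine h1.congr' ?_
    filter_upwards [hmem] with e he
    rw [Real.exp_log (by linarith [hrpos e he])]; ring
  have hed1 : Real.exp d - 1 ≠ 0 := by
    have : Real.exp 0 < Real.exp d := Real.exp_lt_exp.mpr hd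
    simp only [Real.exp_zero] at this
    linarith
  -- t → 1
  have htt : Tendsto t l (nhds 1) := by
    have hid : Tendsto (fun e : ℝ => e) l (nhds 0) :=
      tendsto_id.mono_right nhdsWithin_le_nhds
    have h1 : Tendsto (fun e => 1 + e / r e) l (nhds (1 + 0 / (Real.exp d - 1))) :=
      tendsto_const_nhds.add (hid.div hrt hed1)
    rw [show (1:ℝ) + 0 / (Real.exp d - 1) = 1 by simp] at h1
    refine h1.congr' ?_
    filter_upwards [hmem] with e he
    obtain ⟨h1', _⟩ := ht e he
    have hs : (0:ℝ) < t e - 1 := by linarith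
    rw [hr_def]
    simp only []
    rw [div_div_eq_mul_div, mul_comm, mul_div_assoc, div_self he.1.ne', mul_one]
    ring
  -- final
  have hfin : Tendsto (fun e => t e * (r e / (1 + r e))) l
      (nhds (1 - Real.exp (-d))) := by
    have hden : (1:ℝ) + (Real.exp d - 1) ≠ 0 := by
      have := Real.exp_pos d; intro h; linarith
    have h1 : Tendsto (fun e => 1 + r e) l (nhds (1 + (Real.exp d - 1))) :=
      tendsto_const_nhds.add hrt
    have := htt.mul (hrt.div h1 hden)
    have hval : 1 * ((Real.exp d - 1) / (1 + (Real.exp d - 1))) = 1 - Real.exp (-d) := by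
      rw [Real.exp_neg]
      have := Real.exp_pos d
      field_simp
      ring
    rwa [hval] at this
  refine hfin.congr' ?_
  filter_upwards [hmem] with e he
  obtain ⟨h1, h2⟩ := ht e he
  have he0 : 0 < e := he.1
  have hs : 0 < t e - 1 := by linarith
  have ht0 : 0 < t e := by linarith
  have hse : 0 < t e - 1 + e := by linarith
  have e1 : (t e) ^ e * (t e) ^ (1 - e) = t e := by
    rw [← Real.rpow_add ht0]; norm_num
  have e2 : (t e - 1) ^ (1 - e) * (t e - 1) ^ (e - 1) = 1 := by
    rw [← Real.rpow_add hs]; norm_num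
  have lhs_eq : t e * (r e / (1 + r e)) = t e * e / (t e - 1 + e) := by
    rw [hr_def]
    field_simp
  rw [lhs_eq, ← h2]
  rw [show t e ^ e * (t e - 1) ^ (1 - e) / (t e - 1 + e) * (t e - 1) ^ (e - 1) * t e ^ (1 - e) * e
      = (t e ^ e * t e ^ (1 - e)) * ((t e - 1) ^ (1 - e) * (t e - 1) ^ (e - 1)) * e
        / (t e - 1 + e) from by ring, e1, e2]
  ring
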